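/- Let T be a tree obtained from the path P₄ = v₁v₂v₃v₄ by attaching a pendant edge uv₃, let H be a connected graph with vertex w, and let G₁ = T(v₄)∘H(w). Let G₂ be obtained from G₁ by deleting the edge uv₃ and adding the edge uv₁. Then ρ(G₂²) < ρ(G₁²). -/

import Mathlib

open SimpleGraph Finset Matrix
open scoped Classical

/-- Spectral radius of a finite simple graph: the supremum of eigenvalues of its
adjacency matrix. -/
noncomputable def specRad {V : Type*} [Fintype V] (G : SimpleGraph V) : ℝ :=
  sSup {μ : ℝ | ∃ x : V → ℝ, x ≠ 0 ∧
    (Matrix.of fun i j => if G.Adj i j then (1 : ℝ) else 0) *ᵥ x = μ • x}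

/-- The square of a graph: join vertices at distance 1 or 2. -/
def gsq {V : Type*} (G : SimpleGraph V) : SimpleGraph V :=
  SimpleGraph.fromRel (fun a b => G.dist a b = 1 ∨ G.dist a b = 2)

/-- Coalescence `H₁(v) ∘ H₂(w)`: identify the vertex `v` of `H₁` with the vertex `w`
of `H₂` (the identified vertex is `Sum.inl v`). -/
def coal {V₁ V₂ : Type*} (H₁ : SimpleGraph V₁) (v : V₁) (H₂ : SimpleGraph V₂) (w : V₂) :
    SimpleGraph (V₁ ⊕ {x : V₂ // x ≠ w}) :=
  SimpleGraph.fromRel (fun a b =>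
    match a, b with
    | Sum.inl a, Sum.inl b => H₁.Adj a b
    | Sum.inl a, Sum.inr b => a = v ∧ H₂.Adj w b.1
    | Sum.inr a, Sum.inr b => H₂.Adj a.1 b.1
    | Sum.inr _, Sum.inl _ => False)

/-- The star on `n` vertices with center `0`. -/
def starGraph (n : ℕ) : SimpleGraph (Fin n) :=
  SimpleGraph.fromRel (fun a _ => a.val = 0)

/-- The star on a vertex set `V` centered at `u`. -/
def starAt {V : Type*} (u : V) : SimpleGraph V :=
  SimpleGraph.fromRel (fun a _ => a = u)

/-- A unicyclic graph: connected with exactly as many edges as vertices. -/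
def IsUnicyclic {V : Type*} [Fintype V] (G : SimpleGraph V) : Prop :=
  G.Connected ∧ G.edgeSet.ncard = Fintype.card V

/-- Degree of a vertex. -/
noncomputable def deg {V : Type*} [Fintype V] (G : SimpleGraph V) (v : V) : ℕ :=
  (Finset.univ.filter fun u => G.Adj v u).card

/-- Average degree of a finite graph, as a real number. -/
noncomputable def avgDeg {V : Type*} [Fintype V] (G : SimpleGraph V) : ℝ :=
  (∑ v, (deg G v : ℝ)) / Fintype.card V

/-- Maximum degree of a finite graph. -/
noncomputable def maxDeg {V : Type*} [Fintype V] (G : SimpleGraph V) : ℕ :=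
  Finset.univ.sup fun v => deg G v

set_option linter.unusedSectionVars false
set_option linter.unusedTactic false
set_option linter.unreachableTactic false
set_option linter.unnecessarySimpa false

section Toolbox
variable {n : Type*} [Fintype n] [Nonempty n] (G : SimpleGraph n)

noncomputable def adjM : Matrix n n ℝ := Matrix.of fun i j => if G.Adj i j then (1 : ℝ) else 0

def eigSet : Set ℝ := {μ : ℝ | ∃ x : n → ℝ, x ≠ 0 ∧ adjM G *ᵥ x = μ • x}

lemma specRad_eq : specRad G = sSup (eigSet G) := rfl

lemma adjM_symm (i j : n) : adjM G i j = adjM G j i := by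
  simp only [adjM, Matrix.of_apply, SimpleGraph.adj_comm]

lemma adjM_nonneg (i j : n) : 0 ≤ adjM G i j := by
  simp only [adjM, Matrix.of_apply]; split <;> norm_num

lemma adjM_le_one (i j : n) : adjM G i j ≤ 1 := by
  simp only [adjM, Matrix.of_apply]; split <;> norm_num

lemma adjM_transpose : (adjM G)ᵀ = adjM G := by
  ext i j; simp [Matrix.transpose_apply, adjM_symm G i j]

lemma adjM_isHerm : (adjM G).IsHermitian := by
  ext i j
  simp [Matrix.conjTranspose_apply, adjM_symm G j i]

lemma adjM_of_adj {i j : n} (h : G.Adj i j) : adjM G i j = 1 := by simp [adjM, h]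
lemma adjM_of_not_adj {i j : n} (h : ¬ G.Adj i j) : adjM G i j = 0 := by simp [adjM, h]

noncomputable def toE (x : n → ℝ) : EuclideanSpace ℝ n := (WithLp.equiv 2 (n → ℝ)).symm x

@[simp] lemma toE_coe (v : EuclideanSpace ℝ n) : toE (⇑v) = v := rfl
@[simp] lemma coe_toE (x : n → ℝ) : ⇑(toE x) = x := rfl

lemma inner_eq_dot (u v : EuclideanSpace ℝ n) : (inner ℝ u v : ℝ) = ⇑u ⬝ᵥ ⇑v := by
  simp [PiLp.inner_apply, dotProduct, RCLike.inner_apply, mul_comm]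

lemma mulVec_symm_dot (x y : n → ℝ) :
    x ⬝ᵥ (adjM G *ᵥ y) = (adjM G *ᵥ x) ⬝ᵥ y := by
  rw [Matrix.dotProduct_mulVec, ← Matrix.mulVec_transpose, adjM_transpose]

noncomputable def evB := (adjM_isHerm G).eigenvectorBasis
noncomputable def evals := (adjM_isHerm G).eigenvalues

lemma evB_eigen (i : n) : adjM G *ᵥ ⇑(evB G i) = evals G i • ⇑(evB G i) :=
  (adjM_isHerm G).mulVec_eigenvectorBasis i

lemma evals_mem (i : n) : evals G i ∈ eigSet G := by
  refine ⟨⇑(evB G i), ?_, evB_eigen G i⟩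
  intro h
  exact (evB G).orthonormal.ne_zero i (by rw [← toE_coe (evB G i), h]; rfl)

lemma eigSet_bddAbove : ∀ μ ∈ eigSet G, μ ≤ (Fintype.card n : ℝ) := by
  rintro μ ⟨x, hx, hAx⟩
  obtain ⟨i, hi⟩ := Finite.exists_max (fun i => |x i|)
  have hxi : 0 < |x i| := by
    rcases (Function.ne_iff).1 hx with ⟨j, hj⟩
    exact lt_of_lt_of_le (abs_pos.2 hj) (hi j)
  have h1 : μ * x i = ∑ j, adjM G i j * x j := by
    have := congrFun hAx i
    simpa [Matrix.mulVec, dotProduct, Pi.smul_apply, smul_eq_mul] using this.symm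
  have h2 : |μ| * |x i| ≤ (Fintype.card n : ℝ) * |x i| := by
    calc |μ| * |x i| = |∑ j, adjM G i j * x j| := by rw [← abs_mul, h1]
    _ ≤ ∑ j, |adjM G i j * x j| := Finset.abs_sum_le_sum_abs _ _
    _ ≤ ∑ _j : n, |x i| := by
        refine Finset.sum_le_sum fun j _ => ?_
        rw [abs_mul, abs_of_nonneg (adjM_nonneg G i j)]
        exact le_trans (mul_le_mul (adjM_le_one G i j) (hi j) (abs_nonneg _) zero_le_one)
          (by rw [one_mul])
    _ = (Fintype.card n : ℝ) * |x i| := by simp [Finset.card_univ, mul_comm]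
  have := le_of_mul_le_mul_right h2 hxi
  exact le_trans (le_abs_self μ) this

lemma eigSet_eq_range : eigSet G = Set.range (evals G) := by
  ext μ
  constructor
  · rintro ⟨x, hx, hAx⟩
    by_contra hμ
    simp only [Set.mem_range, not_exists] at hμ
    apply hx
    have hrepr : ∀ i : n, (evB G).repr (toE x) i = 0 := by
      intro i
      have key : μ * (⇑(evB G i) ⬝ᵥ x) = evals G i * (⇑(evB G i) ⬝ᵥ x) := by
        have h1 : ⇑(evB G i) ⬝ᵥ (adjM G *ᵥ x) = (adjM G *ᵥ ⇑(evB G i)) ⬝ᵥ x :=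
          mulVec_symm_dot G _ _
        rw [hAx, evB_eigen] at h1
        simpa [dotProduct_smul, smul_dotProduct, smul_eq_mul] using h1
      have hz : ⇑(evB G i) ⬝ᵥ x = 0 := by
        by_contra hne
        exact hμ i (mul_right_cancel₀ hne key).symm
      rw [OrthonormalBasis.repr_apply_apply, inner_eq_dot, coe_toE]
      exact hz
    have h0 : toE x = 0 := by
      apply ((evB G).repr.toLinearEquiv).map_eq_zero_iff.1
      ext i
      exact hrepr i
    have : ⇑(toE x) = ⇑(0 : EuclideanSpace ℝ n) := congrArg _ h0
    simpa using this
  · rintro ⟨i, rfl⟩; exact evals_mem G i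

lemma eigSet_nonempty : (eigSet G).Nonempty := ⟨_, evals_mem G (Classical.arbitrary n)⟩

lemma specRad_mem : specRad G ∈ eigSet G := by
  rw [specRad_eq]
  refine Set.Nonempty.csSup_mem (eigSet_nonempty G) ?_
  rw [eigSet_eq_range]; exact Set.finite_range _

lemma evals_le_specRad (i : n) : evals G i ≤ specRad G :=
  le_csSup ⟨_, fun μ hμ => eigSet_bddAbove G μ hμ⟩ (evals_mem G i)

lemma repr_mulVec (x : n → ℝ) (i : n) :
    (evB G).repr (toE (adjM G *ᵥ x)) i = evals G i * (evB G).repr (toE x) i := by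
  rw [OrthonormalBasis.repr_apply_apply, OrthonormalBasis.repr_apply_apply,
    inner_eq_dot, inner_eq_dot, coe_toE, coe_toE, mulVec_symm_dot, evB_eigen]
  simp [smul_dotProduct, smul_eq_mul]

lemma dot_via_repr (x y : n → ℝ) :
    x ⬝ᵥ y = ∑ i, (evB G).repr (toE x) i * (evB G).repr (toE y) i := by
  have h1 : (inner ℝ (toE x) (toE y) : ℝ) = x ⬝ᵥ y := by rw [inner_eq_dot, coe_toE, coe_toE]
  rw [← h1, ← (evB G).repr.inner_map_map (toE x) (toE y), inner_eq_dot]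
  rfl

lemma dotA_via_repr (x : n → ℝ) :
    x ⬝ᵥ (adjM G *ᵥ x) = ∑ i, evals G i * ((evB G).repr (toE x) i)^2 := by
  rw [dot_via_repr G x (adjM G *ᵥ x)]
  exact Finset.sum_congr rfl fun i _ => by rw [repr_mulVec]; ring

lemma dotSelf_via_repr (x : n → ℝ) :
    x ⬝ᵥ x = ∑ i, ((evB G).repr (toE x) i)^2 := by
  rw [dot_via_repr G x x]
  exact Finset.sum_congr rfl fun i _ => by ring

lemma rayleigh_le (x : n → ℝ) :
    x ⬝ᵥ (adjM G *ᵥ x) ≤ specRad G * (x ⬝ᵥ x) := by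
  rw [dotA_via_repr, dotSelf_via_repr, Finset.mul_sum]
  refine Finset.sum_le_sum fun i _ => ?_
  have h1 : evals G i ≤ specRad G := evals_le_specRad G i
  nlinarith [sq_nonneg ((evB G).repr (toE x) i)]

lemma eigen_of_rayleigh_eq (x : n → ℝ)
    (h : x ⬝ᵥ (adjM G *ᵥ x) = specRad G * (x ⬝ᵥ x)) :
    adjM G *ᵥ x = specRad G • x := by
  have hsum : ∑ i, (specRad G - evals G i) * ((evB G).repr (toE x) i)^2 = 0 := by
    have h1 := dotA_via_repr G x
    have h2 := dotSelf_via_repr G x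
    rw [h1, h2, Finset.mul_sum] at h
    have e : ∑ i, (specRad G - evals G i) * ((evB G).repr (toE x) i)^2
        = ∑ i, (specRad G * ((evB G).repr (toE x) i)^2
            - evals G i * ((evB G).repr (toE x) i)^2) :=
      Finset.sum_congr rfl fun i _ => by ring
    rw [e, Finset.sum_sub_distrib, ← h, sub_self]
  have hkey : ∀ i ∈ Finset.univ, (specRad G - evals G i) * ((evB G).repr (toE x) i)^2 = 0 :=
    (Finset.sum_eq_zero_iff_of_nonneg fun i _ => by
      have := evals_le_specRad G i
      nlinarith [sq_nonneg ((evB G).repr (toE x) i)]).1 hsum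
  have hre : (evB G).repr (toE (adjM G *ᵥ x)) = (evB G).repr (toE (specRad G • x)) := by
    ext i
    rw [repr_mulVec]
    have h2 : (evB G).repr (toE (specRad G • x)) i = specRad G * (evB G).repr (toE x) i := by
      have h3 : toE (specRad G • x) = specRad G • toE x := rfl
      rw [h3, _root_.map_smul]; rfl
    rw [h2]
    rcases mul_eq_zero.1 (hkey i (Finset.mem_univ i)) with h | h
    · rw [show evals G i = specRad G from by linarith [sub_eq_zero.1 h]]
    · rw [show (evB G).repr (toE x) i = 0 from pow_eq_zero_iff (n := 2) (by norm_num) |>.1 h]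
      ring
  have h4 : toE (adjM G *ᵥ x) = toE (specRad G • x) := (evB G).repr.injective hre
  have h5 : ⇑(toE (adjM G *ᵥ x)) = ⇑(toE (specRad G • x)) := congrArg _ h4
  simpa using h5


lemma one_le_specRad {u v : n} (h : G.Adj u v) : 1 ≤ specRad G := by
  classical
  set y : n → ℝ := fun z => if z = u ∨ z = v then 1 else 0 with hy
  have huv : u ≠ v := h.ne
  have hyy : y ⬝ᵥ y = 2 := by
    simp only [dotProduct, hy]
    rw [Finset.sum_congr rfl (fun z _ => by
      by_cases hz : z = u ∨ z = v <;> simp [hz] : ∀ z ∈ Finset.univ,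
        (if z = u ∨ z = v then (1:ℝ) else 0) * (if z = u ∨ z = v then (1:ℝ) else 0)
        = if z ∈ ({u, v} : Finset n) then (1:ℝ) else 0)]
    rw [Finset.sum_ite_mem, Finset.univ_inter, Finset.sum_const, Finset.card_pair huv]
    norm_num
  have hAy : ∀ z : n, (adjM G *ᵥ y) z = adjM G z u + adjM G z v := by
    intro z
    simp only [Matrix.mulVec, dotProduct, hy]
    rw [Finset.sum_congr rfl (fun t _ => by
      by_cases ht : t = u ∨ t = v
      · rcases ht with rfl | rfl <;> simp [huv, Ne.symm huv]
      · push_neg at ht; simp [ht.1, ht.2] : ∀ t ∈ Finset.univ,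
        adjM G z t * (if t = u ∨ t = v then (1:ℝ) else 0)
        = (if t = u then adjM G z u else 0) + (if t = v then adjM G z v else 0))]
    rw [Finset.sum_add_distrib, Finset.sum_ite_eq', Finset.sum_ite_eq']
    simp
  have hterm : ∀ z ∈ Finset.univ, y z * (adjM G *ᵥ y) z
      = if z ∈ ({u, v} : Finset n) then (adjM G z u + adjM G z v) else 0 := by
    intro z _
    by_cases hz : z = u ∨ z = v
    · rw [hAy]; simp [hy, hz, hAy, Finset.mem_insert, Finset.mem_singleton]
    · push_neg at hz
      simp [hy, hz.1, hz.2, Finset.mem_insert, Finset.mem_singleton]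
  have hyAy : y ⬝ᵥ (adjM G *ᵥ y) = 2 := by
    simp only [dotProduct]
    rw [Finset.sum_congr rfl hterm]
    rw [Finset.sum_ite_mem, Finset.univ_inter, Finset.sum_pair huv]
    rw [adjM_of_not_adj G (G.loopless.irrefl u), adjM_of_not_adj G (G.loopless.irrefl v),
      adjM_of_adj G h, adjM_of_adj G h.symm]
    ring
  have hr := rayleigh_le G y
  rw [hyy, hyAy] at hr
  linarith

lemma exists_perron (hc : G.Connected) {u v : n} (e : G.Adj u v) :
    ∃ x : n → ℝ, (∀ i, 0 < x i) ∧ adjM G *ᵥ x = specRad G • x := by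
  obtain ⟨x0, hx0, hAx0⟩ := specRad_mem G
  set ρ := specRad G with hρ
  have hρ1 : 1 ≤ ρ := one_le_specRad G e
  set y : n → ℝ := fun i => |x0 i| with hy
  have hyne : y ≠ 0 := by
    intro hz
    apply hx0
    ext i
    have := congrFun hz i
    simpa [hy, abs_eq_zero] using this
  have hynn : ∀ i, 0 ≤ y i := fun i => abs_nonneg _
  -- A y ≥ ρ y pointwise
  have hAyge : ∀ i, ρ * y i ≤ (adjM G *ᵥ y) i := by
    intro i
    have h1 : (adjM G *ᵥ x0) i = ρ * x0 i := by rw [hAx0]; rfl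
    have h2 : |(adjM G *ᵥ x0) i| ≤ (adjM G *ᵥ y) i := by
      simp only [Matrix.mulVec, dotProduct]
      refine le_trans (Finset.abs_sum_le_sum_abs _ _) (Finset.sum_le_sum fun j _ => ?_)
      rw [abs_mul, abs_of_nonneg (adjM_nonneg G i j)]
    calc ρ * y i = ρ * |x0 i| := rfl
    _ ≤ |ρ * x0 i| := by rw [abs_mul]; exact mul_le_mul_of_nonneg_right (le_abs_self ρ) (abs_nonneg _)
    _ = |(adjM G *ᵥ x0) i| := by rw [h1]
    _ ≤ (adjM G *ᵥ y) i := h2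
  -- Rayleigh equality for y
  have hylow : ρ * (y ⬝ᵥ y) ≤ y ⬝ᵥ (adjM G *ᵥ y) := by
    simp only [dotProduct]
    rw [Finset.mul_sum]
    refine Finset.sum_le_sum fun i _ => ?_
    have := hAyge i
    have := hynn i
    calc ρ * (y i * y i) = (ρ * y i) * y i := by ring
    _ ≤ (adjM G *ᵥ y) i * y i := mul_le_mul_of_nonneg_right (hAyge i) (hynn i)
    _ = y i * (adjM G *ᵥ y) i := by ring
  have heq : y ⬝ᵥ (adjM G *ᵥ y) = ρ * (y ⬝ᵥ y) :=
    le_antisymm (rayleigh_le G y) hylow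
  have hAy : adjM G *ᵥ y = ρ • y := eigen_of_rayleigh_eq G y heq
  -- positivity
  have hstep : ∀ a b : n, G.Adj a b → y a = 0 → y b = 0 := by
    intro a b hab ha
    have h1 : (adjM G *ᵥ y) a = 0 := by rw [hAy]; simp [Pi.smul_apply, ha, smul_eq_mul]
    have h2 : ∑ k, adjM G a k * y k = 0 := h1
    have h3 : ∀ k ∈ Finset.univ, 0 ≤ adjM G a k * y k :=
      fun k _ => mul_nonneg (adjM_nonneg G a k) (hynn k)
    have h4 := (Finset.sum_eq_zero_iff_of_nonneg h3).1 h2 b (Finset.mem_univ b)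
    rw [adjM_of_adj G hab] at h4
    linarith
  have hzero : ∀ i j : n, G.Reachable i j → y i = 0 → y j = 0 := by
    intro i j hij
    obtain ⟨p⟩ := hij
    induction p with
    | nil => exact fun hh => hh
    | cons hadj p ih => exact fun hh => ih (hstep _ _ hadj hh)
  have hpos : ∀ i, 0 < y i := by
    intro i
    rcases lt_or_eq_of_le (hynn i) with h | h
    · exact h
    · exfalso
      apply hyne
      ext j
      exact hzero i j (hc.preconnected i j) h.symm
  exact ⟨y, hpos, hAy⟩

end Toolbox

lemma walk_two {V : Type*} {G : SimpleGraph V} {a b : V} (p : G.Walk a b)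
    (hp : p.length = 2) : ∃ m, G.Adj a m ∧ G.Adj m b := by
  cases p with
  | nil => simp at hp
  | cons h q =>
    rename_i m
    exact ⟨m, h, SimpleGraph.Walk.adj_of_length_eq_one (by simpa using hp)⟩

lemma gsq_adj_iff {V : Type*} (G : SimpleGraph V) (a b : V) :
    (gsq G).Adj a b ↔ a ≠ b ∧ (G.Adj a b ∨ ∃ m, G.Adj a m ∧ G.Adj m b) := by
  rw [gsq, SimpleGraph.fromRel_adj]
  constructor
  · rintro ⟨hne, hd⟩
    refine ⟨hne, ?_⟩
    have hd' : G.dist a b = 1 ∨ G.dist a b = 2 := by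
      rcases hd with h | h
      · exact h
      · rwa [SimpleGraph.dist_comm] at h
    rcases hd' with h | h
    · exact Or.inl (SimpleGraph.dist_eq_one_iff_adj.1 h)
    · obtain ⟨p, hp⟩ := SimpleGraph.exists_walk_of_dist_ne_zero (by rw [h]; norm_num : G.dist a b ≠ 0)
      exact Or.inr (walk_two p (by rw [hp, h]))
  · rintro ⟨hne, h | ⟨m, h1, h2⟩⟩
    · exact ⟨hne, Or.inl (Or.inl (SimpleGraph.dist_eq_one_iff_adj.2 h))⟩
    · refine ⟨hne, Or.inl ?_⟩
      have hr : G.Reachable a b := ⟨SimpleGraph.Walk.cons h1 (SimpleGraph.Walk.cons h2 SimpleGraph.Walk.nil)⟩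
      have hle : G.dist a b ≤ 2 := by
        have := SimpleGraph.dist_le (SimpleGraph.Walk.cons h1 (SimpleGraph.Walk.cons h2 SimpleGraph.Walk.nil))
        simpa using this
      have hne0 : G.dist a b ≠ 0 := by
        rw [Ne, SimpleGraph.dist_eq_zero_iff_eq_or_not_reachable]
        push_neg
        exact ⟨hne, hr⟩
      omega

def TA : SimpleGraph (Fin 5) := SimpleGraph.fromRel fun a b : Fin 5 =>
  (a, b) ∈ ({(0, 1), (1, 2), (2, 3), (4, 0)} : Set (Fin 5 × Fin 5))
def TB : SimpleGraph (Fin 5) := SimpleGraph.fromRel fun a b : Fin 5 =>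
  (a, b) ∈ ({(0, 1), (1, 2), (2, 3), (4, 2)} : Set (Fin 5 × Fin 5))

def relA (a b : Fin 5) : Prop :=
  (a=0∧b=1) ∨ (a=1∧b=0) ∨ (a=1∧b=2) ∨ (a=2∧b=1) ∨ (a=2∧b=3) ∨ (a=3∧b=2) ∨ (a=4∧b=0) ∨ (a=0∧b=4)
def relB (a b : Fin 5) : Prop :=
  (a=0∧b=1) ∨ (a=1∧b=0) ∨ (a=1∧b=2) ∨ (a=2∧b=1) ∨ (a=2∧b=3) ∨ (a=3∧b=2) ∨ (a=4∧b=2) ∨ (a=2∧b=4)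

lemma TA_adj (a b : Fin 5) : TA.Adj a b ↔ relA a b := by
  rw [TA, SimpleGraph.fromRel_adj]
  simp only [Set.mem_insert_iff, Set.mem_singleton_iff, Prod.mk.injEq, relA]
  fin_cases a <;> fin_cases b <;> simp <;> decide

lemma TB_adj (a b : Fin 5) : TB.Adj a b ↔ relB a b := by
  rw [TB, SimpleGraph.fromRel_adj]
  simp only [Set.mem_insert_iff, Set.mem_singleton_iff, Prod.mk.injEq, relB]
  fin_cases a <;> fin_cases b <;> simp <;> decide

section CoalAdj
variable {V : Type*} (H : SimpleGraph V) (w : V) (T : SimpleGraph (Fin 5))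

open Sum

lemma coal_adj_ll (a b : Fin 5) : (coal T 3 H w).Adj (inl a) (inl b) ↔ T.Adj a b := by
  rw [coal, SimpleGraph.fromRel_adj]
  constructor
  · rintro ⟨hne, h | h⟩
    · exact h
    · exact h.symm
  · intro h
    exact ⟨by simp [h.ne], Or.inl h⟩

lemma coal_adj_lr (a : Fin 5) (x : {x : V // x ≠ w}) :
    (coal T 3 H w).Adj (inl a) (inr x) ↔ a = 3 ∧ H.Adj w x.1 := by
  rw [coal, SimpleGraph.fromRel_adj]
  constructor
  · rintro ⟨hne, h | h⟩
    · exact h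
    · exact h.elim
  · intro h
    exact ⟨by simp, Or.inl h⟩

lemma coal_adj_rl (a : Fin 5) (x : {x : V // x ≠ w}) :
    (coal T 3 H w).Adj (inr x) (inl a) ↔ a = 3 ∧ H.Adj w x.1 := by
  rw [SimpleGraph.adj_comm, coal_adj_lr]

lemma coal_adj_rr (x y : {x : V // x ≠ w}) :
    (coal T 3 H w).Adj (inr x) (inr y) ↔ H.Adj x.1 y.1 := by
  rw [coal, SimpleGraph.fromRel_adj]
  constructor
  · rintro ⟨hne, h | h⟩
    · exact h
    · exact h.symm
  · intro h
    refine ⟨?_, Or.inl h⟩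
    simp only [ne_eq, inr.injEq]
    intro he
    exact h.ne (congrArg Subtype.val he)

end CoalAdj

section Squares
open Sum
variable {V : Type*} (H : SimpleGraph V) (w : V)

-- edge helpers
lemma eA {a b : Fin 5} (h : relA a b) : (coal TA 3 H w).Adj (inl a) (inl b) :=
  (coal_adj_ll H w TA a b).2 ((TA_adj a b).2 h)
lemma eB {a b : Fin 5} (h : relB a b) : (coal TB 3 H w).Adj (inl a) (inl b) :=
  (coal_adj_ll H w TB a b).2 ((TB_adj a b).2 h)

-- squares: positive facts for GA
lemma sqA_01 : (gsq (coal TA 3 H w)).Adj (inl 0) (inl 1) :=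
  (gsq_adj_iff _ _ _).2 ⟨by simp, Or.inl (eA H w (by left; exact ⟨rfl, rfl⟩))⟩
lemma sqA_04 : (gsq (coal TA 3 H w)).Adj (inl 0) (inl 4) :=
  (gsq_adj_iff _ _ _).2 ⟨by simp, Or.inl (eA H w (by right;right;right;right;right;right;right; exact ⟨rfl, rfl⟩))⟩
lemma sqA_02 : (gsq (coal TA 3 H w)).Adj (inl 0) (inl 2) :=
  (gsq_adj_iff _ _ _).2 ⟨by simp, Or.inr ⟨inl 1,
    eA H w (by left; exact ⟨rfl, rfl⟩),
    eA H w (by right;right;left; exact ⟨rfl, rfl⟩)⟩⟩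
lemma sqA_12 : (gsq (coal TA 3 H w)).Adj (inl 1) (inl 2) :=
  (gsq_adj_iff _ _ _).2 ⟨by simp, Or.inl (eA H w (by right;right;left; exact ⟨rfl, rfl⟩))⟩
lemma sqA_13 : (gsq (coal TA 3 H w)).Adj (inl 1) (inl 3) :=
  (gsq_adj_iff _ _ _).2 ⟨by simp, Or.inr ⟨inl 2,
    eA H w (by right;right;left; exact ⟨rfl, rfl⟩),
    eA H w (by right;right;right;right;left; exact ⟨rfl, rfl⟩)⟩⟩
lemma sqA_14 : (gsq (coal TA 3 H w)).Adj (inl 1) (inl 4) :=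
  (gsq_adj_iff _ _ _).2 ⟨by simp, Or.inr ⟨inl 0,
    eA H w (by right;left; exact ⟨rfl, rfl⟩),
    eA H w (by right;right;right;right;right;right;right; exact ⟨rfl, rfl⟩)⟩⟩
lemma sqA_23 : (gsq (coal TA 3 H w)).Adj (inl 2) (inl 3) :=
  (gsq_adj_iff _ _ _).2 ⟨by simp, Or.inl (eA H w (by right;right;right;right;left; exact ⟨rfl, rfl⟩))⟩

-- negatives for GA
lemma notA_03 : ¬ (gsq (coal TA 3 H w)).Adj (inl 0) (inl 3) := by
  rw [gsq_adj_iff]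
  rintro ⟨-, h | ⟨m, h1, h2⟩⟩
  · rw [coal_adj_ll, TA_adj] at h; simp [relA] at h
  · rcases m with m | x
    · rw [coal_adj_ll, TA_adj] at h1 h2
      fin_cases m <;> simp [relA] at h1 h2
    · rw [coal_adj_lr] at h1; simp at h1

lemma notA_24 : ¬ (gsq (coal TA 3 H w)).Adj (inl 2) (inl 4) := by
  rw [gsq_adj_iff]
  rintro ⟨-, h | ⟨m, h1, h2⟩⟩
  · rw [coal_adj_ll, TA_adj] at h; simp [relA] at h
  · rcases m with m | x
    · rw [coal_adj_ll, TA_adj] at h1 h2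
      fin_cases m <;> simp [relA] at h1 h2
    · rw [coal_adj_lr] at h1; simp at h1

lemma notA_34 : ¬ (gsq (coal TA 3 H w)).Adj (inl 3) (inl 4) := by
  rw [gsq_adj_iff]
  rintro ⟨-, h | ⟨m, h1, h2⟩⟩
  · rw [coal_adj_ll, TA_adj] at h; simp [relA] at h
  · rcases m with m | x
    · rw [coal_adj_ll, TA_adj] at h1 h2
      fin_cases m <;> simp [relA] at h1 h2
    · rw [coal_adj_rl] at h2; simp at h2

lemma notA_0r (x : {x : V // x ≠ w}) : ¬ (gsq (coal TA 3 H w)).Adj (inl 0) (inr x) := by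
  rw [gsq_adj_iff]
  rintro ⟨-, h | ⟨m, h1, h2⟩⟩
  · rw [coal_adj_lr] at h; simp at h
  · rcases m with m | y
    · rw [coal_adj_ll, TA_adj] at h1
      rw [coal_adj_lr] at h2
      obtain ⟨rfl, -⟩ := h2
      simp [relA] at h1
    · rw [coal_adj_lr] at h1; simp at h1

lemma notA_4r (x : {x : V // x ≠ w}) : ¬ (gsq (coal TA 3 H w)).Adj (inl 4) (inr x) := by
  rw [gsq_adj_iff]
  rintro ⟨-, h | ⟨m, h1, h2⟩⟩
  · rw [coal_adj_lr] at h; simp at h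
  · rcases m with m | y
    · rw [coal_adj_ll, TA_adj] at h1
      rw [coal_adj_lr] at h2
      obtain ⟨rfl, -⟩ := h2
      simp [relA] at h1
    · rw [coal_adj_lr] at h1; simp at h1

-- characterizations
lemma sqA_2r (x : {x : V // x ≠ w}) :
    (gsq (coal TA 3 H w)).Adj (inl 2) (inr x) ↔ H.Adj w x.1 := by
  rw [gsq_adj_iff]
  constructor
  · rintro ⟨-, h | ⟨m, h1, h2⟩⟩
    · rw [coal_adj_lr] at h; simp at h
    · rcases m with m | y
      · rw [coal_adj_ll, TA_adj] at h1
        rw [coal_adj_lr] at h2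
        obtain ⟨rfl, hx⟩ := h2
        exact hx
      · rw [coal_adj_lr] at h1; simp at h1
  · intro h
    exact ⟨by simp, Or.inr ⟨inl 3,
      eA H w (by right;right;right;right;left; exact ⟨rfl, rfl⟩),
      (coal_adj_lr H w TA 3 x).2 ⟨rfl, h⟩⟩⟩

lemma sqA_3r (x : {x : V // x ≠ w}) :
    (gsq (coal TA 3 H w)).Adj (inl 3) (inr x) ↔
      (H.Adj w x.1 ∨ ∃ m : {x : V // x ≠ w}, H.Adj w m.1 ∧ H.Adj m.1 x.1) := by
  rw [gsq_adj_iff]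
  constructor
  · rintro ⟨-, h | ⟨m, h1, h2⟩⟩
    · rw [coal_adj_lr] at h
      exact Or.inl h.2
    · rcases m with m | y
      · rw [coal_adj_ll, TA_adj] at h1
        rw [coal_adj_lr] at h2
        obtain ⟨rfl, -⟩ := h2
        simp [relA] at h1
      · rw [coal_adj_lr] at h1
        rw [coal_adj_rr] at h2
        exact Or.inr ⟨y, h1.2, h2⟩
  · rintro (h | ⟨m, h1, h2⟩)
    · exact ⟨by simp, Or.inl ((coal_adj_lr H w TA 3 x).2 ⟨rfl, h⟩)⟩
    · exact ⟨by simp, Or.inr ⟨inr m, (coal_adj_lr H w TA 3 m).2 ⟨rfl, h1⟩,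
        (coal_adj_rr H w TA m x).2 h2⟩⟩

-- neighbor classification in GA (base graph)
lemma nbrA0 {y : Fin 5 ⊕ {x : V // x ≠ w}} (h : (coal TA 3 H w).Adj (inl 0) y) :
    y = inl 1 ∨ y = inl 4 := by
  rcases y with b | x
  · rw [coal_adj_ll, TA_adj] at h
    fin_cases b <;> simp [relA] at h ⊢
  · rw [coal_adj_lr] at h; simp at h

lemma nbrA4 {y : Fin 5 ⊕ {x : V // x ≠ w}} (h : (coal TA 3 H w).Adj (inl 4) y) :
    y = inl 0 := by
  rcases y with b | x
  · rw [coal_adj_ll, TA_adj] at h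
    fin_cases b <;> simp [relA] at h ⊢
  · rw [coal_adj_lr] at h; simp at h

-- positives for GB square
lemma sqB_24 : (gsq (coal TB 3 H w)).Adj (inl 2) (inl 4) :=
  (gsq_adj_iff _ _ _).2 ⟨by simp, Or.inl (eB H w (by right;right;right;right;right;right;right; exact ⟨rfl, rfl⟩))⟩
lemma sqB_14 : (gsq (coal TB 3 H w)).Adj (inl 1) (inl 4) :=
  (gsq_adj_iff _ _ _).2 ⟨by simp, Or.inr ⟨inl 2,
    eB H w (by right;right;left; exact ⟨rfl, rfl⟩),
    eB H w (by right;right;right;right;right;right;right; exact ⟨rfl, rfl⟩)⟩⟩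
lemma sqB_34 : (gsq (coal TB 3 H w)).Adj (inl 3) (inl 4) :=
  (gsq_adj_iff _ _ _).2 ⟨by simp, Or.inr ⟨inl 2,
    eB H w (by right;right;right;right;right;left; exact ⟨rfl, rfl⟩),
    eB H w (by right;right;right;right;right;right;right; exact ⟨rfl, rfl⟩)⟩⟩

-- base edge comparison
lemma edgeAB {x y : Fin 5 ⊕ {x : V // x ≠ w}} (h : (coal TA 3 H w).Adj x y) :
    (coal TB 3 H w).Adj x y ∨ (x = inl 0 ∧ y = inl 4) ∨ (x = inl 4 ∧ y = inl 0) := by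
  rcases x with a | p <;> rcases y with b | q
  · rw [coal_adj_ll, TA_adj] at h
    rw [coal_adj_ll, TB_adj]
    fin_cases a <;> fin_cases b <;> simp_all [relA, relB]
  · rw [coal_adj_lr] at h
    exact Or.inl ((coal_adj_lr H w TB _ _).2 h)
  · rw [coal_adj_rl] at h
    exact Or.inl ((coal_adj_rl H w TB _ _).2 h)
  · rw [coal_adj_rr] at h
    exact Or.inl ((coal_adj_rr H w TB _ _).2 h)

-- the square subgraph lemma
lemma sq_subgraph {x y : Fin 5 ⊕ {x : V // x ≠ w}} (h : (gsq (coal TA 3 H w)).Adj x y)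
    (h1 : ¬(x = inl 0 ∧ y = inl 4)) (h2 : ¬(x = inl 4 ∧ y = inl 0)) :
    (gsq (coal TB 3 H w)).Adj x y := by
  rw [gsq_adj_iff] at h
  obtain ⟨hne, he | ⟨m, ha, hb⟩⟩ := h
  · rcases edgeAB H w he with h' | h' | h'
    · exact (gsq_adj_iff _ _ _).2 ⟨hne, Or.inl h'⟩
    · exact absurd h' h1
    · exact absurd h' h2
  · rcases edgeAB H w ha with ha' | hbad
    · rcases edgeAB H w hb with hb' | hbad2
      · exact (gsq_adj_iff _ _ _).2 ⟨hne, Or.inr ⟨m, ha', hb'⟩⟩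
      · rcases hbad2 with ⟨rfl, rfl⟩ | ⟨rfl, rfl⟩
        · rcases nbrA0 H w ha.symm with rfl | rfl
          · exact sqB_14 H w
          · exact absurd rfl hne
        · have := nbrA4 H w ha.symm
          subst this
          exact absurd rfl hne
    · rcases hbad with ⟨rfl, rfl⟩ | ⟨rfl, rfl⟩
      · have := nbrA4 H w hb
        subst this
        exact absurd rfl hne
      · rcases nbrA0 H w hb with rfl | rfl
        · exact (sqB_14 H w).symm
        · exact absurd rfl hne
end Squares

section Conn
open Sum
variable {V : Type*} (H : SimpleGraph V) (w : V)

lemma le_gsq {W' : Type*} (G : SimpleGraph W') : G ≤ gsq G := by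
  intro a b h
  exact (gsq_adj_iff _ _ _).2 ⟨h.ne, Or.inl h⟩

lemma coalA_reach3 (hH : H.Connected) :
    ∀ z, (coal TA 3 H w).Reachable (inl 3) z := by
  have e32 : (coal TA 3 H w).Adj (inl 3) (inl 2) :=
    eA H w (by right;right;right;right;right;left; exact ⟨rfl, rfl⟩)
  have e21 : (coal TA 3 H w).Adj (inl 2) (inl 1) :=
    eA H w (by right;right;right;left; exact ⟨rfl, rfl⟩)
  have e10 : (coal TA 3 H w).Adj (inl 1) (inl 0) :=
    eA H w (by right;left; exact ⟨rfl, rfl⟩)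
  have e04 : (coal TA 3 H w).Adj (inl 0) (inl 4) :=
    eA H w (by right;right;right;right;right;right;right; exact ⟨rfl, rfl⟩)
  have r2 := e32.reachable
  have r1 := r2.trans e21.reachable
  have r0 := r1.trans e10.reachable
  have r4 := r0.trans e04.reachable
  intro z
  rcases z with a | x
  · fin_cases a
    · exact r0
    · exact r1
    · exact r2
    · exact SimpleGraph.Reachable.refl _
    · exact r4
  · -- map H-walks
    classical
    set f : V → (Fin 5 ⊕ {x : V // x ≠ w}) := fun v => if h : v = w then inl 3 else inr ⟨v, h⟩ with hf
    have hstep : ∀ u v : V, H.Adj u v → (coal TA 3 H w).Adj (f u) (f v) := by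
      intro u v huv
      by_cases hu : u = w <;> by_cases hv : v = w
      · rw [hu, hv] at huv; exact absurd huv (H.loopless.irrefl w)
      · simp only [hf, dif_pos hu, dif_neg hv]
        rw [hu] at huv; exact (coal_adj_lr H w TA 3 ⟨v, hv⟩).2 ⟨rfl, huv⟩
      · simp only [hf, dif_neg hu, dif_pos hv]
        rw [hv] at huv; exact (coal_adj_rl H w TA 3 ⟨u, hu⟩).2 ⟨rfl, huv.symm⟩
      · simp only [hf, dif_neg hu, dif_neg hv]
        exact (coal_adj_rr H w TA ⟨u, hu⟩ ⟨v, hv⟩).2 huv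
    have hreach : ∀ u v : V, H.Reachable u v → (coal TA 3 H w).Reachable (f u) (f v) := by
      intro u v huv
      obtain ⟨p⟩ := huv
      induction p with
      | nil => exact SimpleGraph.Reachable.refl _
      | cons hadj p ih => exact ((hstep _ _ hadj).reachable).trans ih
    have h1 : f w = inl 3 := by simp [hf]
    have h2 : f x.1 = inr x := by
      simp only [hf, dif_neg x.2]
    have := hreach w x.1 (hH.preconnected w x.1)
    rwa [h1, h2] at this

lemma gsqA_connected (hH : H.Connected) : (gsq (coal TA 3 H w)).Connected := by
  have hc : (coal TA 3 H w).Connected := by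
    rw [SimpleGraph.connected_iff]
    refine ⟨?_, ⟨inl 0⟩⟩
    intro a b
    exact ((coalA_reach3 H w hH a).symm).trans (coalA_reach3 H w hH b)
  exact hc.mono (le_gsq _)

end Conn

section Main
open Sum
variable {V : Type*} [Fintype V] (H : SimpleGraph V) (w : V)

set_option maxHeartbeats 1000000 in
theorem main_lt (hH : H.Connected) :
    specRad (gsq (coal TA 3 H w)) < specRad (gsq (coal TB 3 H w)) := by
  classical
  haveI : Nonempty (Fin 5 ⊕ {x : V // x ≠ w}) := ⟨inl 0⟩
  obtain ⟨x, hx, hAx⟩ := exists_perron (gsq (coal TA 3 H w)) (gsqA_connected H w hH) (sqA_01 H w)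
  set ρ := specRad (gsq (coal TA 3 H w)) with hρdef
  set A := adjM (gsq (coal TA 3 H w)) with hAdef
  set B := adjM (gsq (coal TB 3 H w)) with hBdef
  have hmv : ∀ z, (A *ᵥ x) z = ρ * x z := by
    intro z; rw [hAx]; rfl
  have expandA : ∀ z, (A *ᵥ x) z
      = (∑ k : Fin 5, A z (inl k) * x (inl k)) + ∑ q, A z (inr q) * x (inr q) := by
    intro z
    simp [hAdef, Matrix.mulVec, dotProduct, Fintype.sum_sum_type]
  -- row equations
  have E0 : ρ * x (inl 0) = x (inl 1) + x (inl 2) + x (inl 4) := by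
    rw [← hmv (inl 0), expandA, Fin.sum_univ_five, hAdef,
      adjM_of_not_adj _ ((gsq (coal TA 3 H w)).loopless.irrefl _),
      adjM_of_adj _ (sqA_01 H w), adjM_of_adj _ (sqA_02 H w),
      adjM_of_not_adj _ (notA_03 H w), adjM_of_adj _ (sqA_04 H w),
      Finset.sum_eq_zero (fun q _ => by
        rw [adjM_of_not_adj _ (notA_0r H w q), zero_mul])]
    ring
  have E4 : ρ * x (inl 4) = x (inl 0) + x (inl 1) := by
    rw [← hmv (inl 4), expandA, Fin.sum_univ_five, hAdef,
      adjM_of_adj _ (sqA_04 H w).symm, adjM_of_adj _ (sqA_14 H w).symm,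
      adjM_of_not_adj _ (fun hh => notA_24 H w hh.symm),
      adjM_of_not_adj _ (fun hh => notA_34 H w hh.symm),
      adjM_of_not_adj _ ((gsq (coal TA 3 H w)).loopless.irrefl _),
      Finset.sum_eq_zero (fun q _ => by
        rw [adjM_of_not_adj _ (notA_4r H w q), zero_mul])]
    ring
  have hsum2 : ∑ q, adjM (gsq (coal TA 3 H w)) (inl 2) (inr q) * x (inr q)
      = ∑ q, ite (H.Adj w q.1) (x (inr q)) 0 :=
    Finset.sum_congr rfl (fun q _ => by
      by_cases hq : H.Adj w q.1
      · rw [adjM_of_adj _ ((sqA_2r H w q).2 hq), one_mul, if_pos hq]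
      · rw [adjM_of_not_adj _ (fun hh => hq ((sqA_2r H w q).1 hh)), zero_mul, if_neg hq])
  have E2 : ρ * x (inl 2) = x (inl 0) + x (inl 1) + x (inl 3)
      + ∑ q, ite (H.Adj w q.1) (x (inr q)) 0 := by
    rw [← hmv (inl 2), expandA, Fin.sum_univ_five, hAdef,
      adjM_of_adj _ (sqA_02 H w).symm, adjM_of_adj _ (sqA_12 H w).symm,
      adjM_of_not_adj _ ((gsq (coal TA 3 H w)).loopless.irrefl _),
      adjM_of_adj _ (sqA_23 H w), adjM_of_not_adj _ (notA_24 H w), hsum2]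
    ring
  have hsum3 : ∑ q, adjM (gsq (coal TA 3 H w)) (inl 3) (inr q) * x (inr q)
      = ∑ q, ite (H.Adj w q.1 ∨ ∃ m : {x : V // x ≠ w}, H.Adj w m.1 ∧ H.Adj m.1 q.1)
          (x (inr q)) 0 :=
    Finset.sum_congr rfl (fun q _ => by
      by_cases hq : H.Adj w q.1 ∨ ∃ m : {x : V // x ≠ w}, H.Adj w m.1 ∧ H.Adj m.1 q.1
      · rw [adjM_of_adj _ ((sqA_3r H w q).2 hq), one_mul, if_pos hq]
      · rw [adjM_of_not_adj _ (fun hh => hq ((sqA_3r H w q).1 hh)), zero_mul, if_neg hq])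
  have E3 : ρ * x (inl 3) = x (inl 1) + x (inl 2)
      + ∑ q, ite (H.Adj w q.1 ∨ ∃ m : {x : V // x ≠ w}, H.Adj w m.1 ∧ H.Adj m.1 q.1)
          (x (inr q)) 0 := by
    rw [← hmv (inl 3), expandA, Fin.sum_univ_five, hAdef,
      adjM_of_not_adj _ (fun hh => notA_03 H w hh.symm),
      adjM_of_adj _ (sqA_13 H w).symm, adjM_of_adj _ (sqA_23 H w).symm,
      adjM_of_not_adj _ ((gsq (coal TA 3 H w)).loopless.irrefl _),
      adjM_of_not_adj _ (notA_34 H w), hsum3]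
    ring
  set s := ∑ q, ite (H.Adj w q.1) (x (inr q)) 0 with hsdef
  set S := ∑ q, ite (H.Adj w q.1 ∨ ∃ m : {x : V // x ≠ w}, H.Adj w m.1 ∧ H.Adj m.1 q.1)
      (x (inr q)) 0 with hSdef
  have hs0 : 0 ≤ s := Finset.sum_nonneg fun q _ => by
    split
    · exact le_of_lt (hx _)
    · exact le_rfl
  have hsS : s ≤ S := Finset.sum_le_sum fun q _ => by
    by_cases hq : H.Adj w q.1
    · rw [if_pos hq, if_pos (Or.inl hq)]
    · rw [if_neg hq]
      split
      · exact le_of_lt (hx _)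
      · exact le_rfl
  have hS0 : 0 ≤ S := le_trans hs0 hsS
  -- rho > 1
  have hρ1 : 1 < ρ := by
    have h0 := hx (inl 0); have h1 := hx (inl 1); have h2 := hx (inl 2); have h4 := hx (inl 4)
    nlinarith [E0, E4, mul_pos h0 h4, mul_pos h1 h4, mul_pos h0 h1]
  -- x2 >= x0
  have hx20 : 0 ≤ x (inl 2) - x (inl 0) := by
    have d1 : ρ*(x (inl 2) - x (inl 0)) + (x (inl 2) - x (inl 0))
        = (x (inl 3) - x (inl 4)) + s := by linear_combination E2 - E0
    have d2 : ρ*(x (inl 3) - x (inl 4)) = (x (inl 2) - x (inl 0)) + S := by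
      linear_combination E3 - E4
    have key : (x (inl 2) - x (inl 0))*(ρ*ρ + ρ - 1) = S + ρ*s := by
      linear_combination ρ * d1 + d2
    nlinarith [key, hρ1, hs0, hS0]
  -- entry comparison
  have entry_le : ∀ u v : Fin 5 ⊕ {x : V // x ≠ w}, ¬(u = inl 0 ∧ v = inl 4) →
      ¬(u = inl 4 ∧ v = inl 0) → A u v ≤ B u v := by
    intro u v h1 h2
    by_cases h : (gsq (coal TA 3 H w)).Adj u v
    · rw [hAdef, adjM_of_adj _ h, hBdef, adjM_of_adj _ (sq_subgraph H w h h1 h2)]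
    · rw [hAdef, adjM_of_not_adj _ h]
      exact adjM_nonneg _ u v
  have xpos : ∀ z, 0 < x z := hx
  have xnn : ∀ z, 0 ≤ x z := fun z => le_of_lt (hx z)
  -- row bounds for B
  have row_easy : ∀ z : Fin 5 ⊕ {x : V // x ≠ w}, (∀ v : Fin 5 ⊕ {x : V // x ≠ w}, ¬(z = inl 0 ∧ v = inl 4) ∧ ¬(z = inl 4 ∧ v = inl 0)) →
      (A *ᵥ x) z ≤ (B *ᵥ x) z := by
    intro z hz
    refine Finset.sum_le_sum fun v _ => ?_
    exact mul_le_mul_of_nonneg_right (entry_le z v (hz v).1 (hz v).2) (xnn v)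
  have row1 : (A *ᵥ x) (inl 1) ≤ (B *ᵥ x) (inl 1) :=
    row_easy (inl 1) (fun v => ⟨by simp, by simp⟩)
  have rowr : ∀ q, (A *ᵥ x) (inr q) ≤ (B *ᵥ x) (inr q) :=
    fun q => row_easy (inr q) (fun v => ⟨by simp, by simp⟩)
  have row0 : (A *ᵥ x) (inl 0) - x (inl 4) ≤ (B *ᵥ x) (inl 0) := by
    have hp : ∀ v ∈ Finset.univ, A (inl 0) v * x v - (if v = inl 4 then x (inl 4) else 0)
        ≤ B (inl 0) v * x v := by
      intro v _
      by_cases hv : v = (inl 4 : Fin 5 ⊕ {x : V // x ≠ w})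
      · subst hv
        rw [if_pos rfl, hAdef, adjM_of_adj _ (sqA_04 H w)]
        have := mul_nonneg (adjM_nonneg (gsq (coal TB 3 H w)) (inl 0) (inl 4)) (xnn (inl 4))
        rw [← hBdef] at this
        linarith
      · rw [if_neg hv]
        have := entry_le (inl 0) v (fun hc => hv hc.2) (by simp)
        nlinarith [xnn v, this]
    have := Finset.sum_le_sum hp
    rw [Finset.sum_sub_distrib, Finset.sum_ite_eq' Finset.univ (inl 4 : Fin 5 ⊕ {x : V // x ≠ w})
      (fun v => x (inl 4))] at this
    simpa [Matrix.mulVec, dotProduct] using this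
  have row2 : (A *ᵥ x) (inl 2) + x (inl 4) ≤ (B *ᵥ x) (inl 2) := by
    have hp : ∀ v ∈ Finset.univ, A (inl 2) v * x v + (if v = inl 4 then x (inl 4) else 0)
        ≤ B (inl 2) v * x v := by
      intro v _
      by_cases hv : v = (inl 4 : Fin 5 ⊕ {x : V // x ≠ w})
      · subst hv
        rw [if_pos rfl, hAdef, adjM_of_not_adj _ (notA_24 H w), hBdef,
          adjM_of_adj _ (sqB_24 H w)]
        linarith [xnn (inl 4)]
      · rw [if_neg hv, add_zero]
        exact mul_le_mul_of_nonneg_right (entry_le (inl 2) v (by simp) (by simp)) (xnn v)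
    have h := Finset.sum_le_sum hp
    rw [Finset.sum_add_distrib, Finset.sum_ite_eq' Finset.univ
      (inl 4 : Fin 5 ⊕ {x : V // x ≠ w}) (fun v => x (inl 4))] at h
    simpa [Matrix.mulVec, dotProduct] using h
  have row3 : (A *ᵥ x) (inl 3) + x (inl 4) ≤ (B *ᵥ x) (inl 3) := by
    have hp : ∀ v ∈ Finset.univ, A (inl 3) v * x v + (if v = inl 4 then x (inl 4) else 0)
        ≤ B (inl 3) v * x v := by
      intro v _
      by_cases hv : v = (inl 4 : Fin 5 ⊕ {x : V // x ≠ w})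
      · subst hv
        rw [if_pos rfl, hAdef, adjM_of_not_adj _ (notA_34 H w), hBdef,
          adjM_of_adj _ (sqB_34 H w)]
        linarith [xnn (inl 4)]
      · rw [if_neg hv, add_zero]
        exact mul_le_mul_of_nonneg_right (entry_le (inl 3) v (by simp) (by simp)) (xnn v)
    have h := Finset.sum_le_sum hp
    rw [Finset.sum_add_distrib, Finset.sum_ite_eq' Finset.univ
      (inl 4 : Fin 5 ⊕ {x : V // x ≠ w}) (fun v => x (inl 4))] at h
    simpa [Matrix.mulVec, dotProduct] using h
  have row4 : (A *ᵥ x) (inl 4) + (x (inl 2) + x (inl 3) - x (inl 0)) ≤ (B *ᵥ x) (inl 4) := by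
    have hp : ∀ v ∈ Finset.univ, A (inl 4) v * x v
        + ((if v = inl 2 then x (inl 2) else 0) + (if v = inl 3 then x (inl 3) else 0)
          - (if v = inl 0 then x (inl 0) else 0))
        ≤ B (inl 4) v * x v := by
      intro v _
      by_cases hv0 : v = (inl 0 : Fin 5 ⊕ {x : V // x ≠ w})
      · subst hv0
        rw [hAdef, adjM_of_adj _ (sqA_04 H w).symm,
          if_neg (show ¬((inl 0 : Fin 5 ⊕ {x : V // x ≠ w}) = inl 2) by simp),
          if_neg (show ¬((inl 0 : Fin 5 ⊕ {x : V // x ≠ w}) = inl 3) by simp),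
          if_pos rfl]
        have hB0 := mul_nonneg (adjM_nonneg (gsq (coal TB 3 H w)) (inl 4) (inl 0)) (xnn (inl 0))
        rw [← hBdef] at hB0
        linarith
      · by_cases hv2 : v = (inl 2 : Fin 5 ⊕ {x : V // x ≠ w})
        · subst hv2
          rw [hAdef, adjM_of_not_adj _ (fun hh => notA_24 H w hh.symm), hBdef,
            adjM_of_adj _ (sqB_24 H w).symm,
            if_pos rfl, if_neg (show ¬((inl 2 : Fin 5 ⊕ {x : V // x ≠ w}) = inl 3) by simp),
            if_neg hv0]
          linarith [xnn (inl 2)]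
        · by_cases hv3 : v = (inl 3 : Fin 5 ⊕ {x : V // x ≠ w})
          · subst hv3
            rw [hAdef, adjM_of_not_adj _ (fun hh => notA_34 H w hh.symm), hBdef,
              adjM_of_adj _ (sqB_34 H w).symm,
            if_neg (show ¬((inl 3 : Fin 5 ⊕ {x : V // x ≠ w}) = inl 2) by simp),
            if_pos rfl, if_neg hv0]
            linarith [xnn (inl 3)]
          · rw [if_neg hv0, if_neg hv2, if_neg hv3]
            have := mul_le_mul_of_nonneg_right
              (entry_le (inl 4) v (by simp) (fun hc => hv0 hc.2)) (xnn v)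
            linarith
    have h := Finset.sum_le_sum hp
    rw [Finset.sum_add_distrib, Finset.sum_sub_distrib, Finset.sum_add_distrib,
      Finset.sum_ite_eq' Finset.univ (inl 2 : Fin 5 ⊕ {x : V // x ≠ w}) (fun v => x (inl 2)),
      Finset.sum_ite_eq' Finset.univ (inl 3 : Fin 5 ⊕ {x : V // x ≠ w}) (fun v => x (inl 3)),
      Finset.sum_ite_eq' Finset.univ (inl 0 : Fin 5 ⊕ {x : V // x ≠ w}) (fun v => x (inl 0))] at h
    simpa [Matrix.mulVec, dotProduct] using h
  -- dot products
  have hdotA : x ⬝ᵥ (A *ᵥ x) = ρ * (x ⬝ᵥ x) := by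
    rw [hAx, dotProduct_smul, smul_eq_mul]
  have hxx : 0 < x ⬝ᵥ x := by
    have : (0:ℝ) < ∑ z, x z * x z :=
      Finset.sum_pos (fun z _ => mul_pos (hx z) (hx z)) ⟨inl 0, Finset.mem_univ _⟩
    exact this
  have expandDot : ∀ M : Matrix (Fin 5 ⊕ {x : V // x ≠ w}) (Fin 5 ⊕ {x : V // x ≠ w}) ℝ,
      x ⬝ᵥ (M *ᵥ x) = (∑ k : Fin 5, x (inl k) * (M *ᵥ x) (inl k))
        + ∑ q, x (inr q) * (M *ᵥ x) (inr q) := by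
    intro M
    simp [dotProduct, Fintype.sum_sum_type]
  have hcompare : x ⬝ᵥ (A *ᵥ x) + 2 * x (inl 4) * (x (inl 2) + x (inl 3) - x (inl 0))
      ≤ x ⬝ᵥ (B *ᵥ x) := by
    have c0 := mul_le_mul_of_nonneg_left row0 (xnn (inl 0))
    have c1 := mul_le_mul_of_nonneg_left row1 (xnn (inl 1))
    have c2 := mul_le_mul_of_nonneg_left row2 (xnn (inl 2))
    have c3 := mul_le_mul_of_nonneg_left row3 (xnn (inl 3))
    have c4 := mul_le_mul_of_nonneg_left row4 (xnn (inl 4))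
    have cr : ∑ q, x (inr q) * (A *ᵥ x) (inr q) ≤ ∑ q, x (inr q) * (B *ᵥ x) (inr q) :=
      Finset.sum_le_sum (fun q _ => mul_le_mul_of_nonneg_left (rowr q) (xnn (inr q)))
    rw [expandDot A, expandDot B, Fin.sum_univ_five, Fin.sum_univ_five]
    linarith [c0, c1, c2, c3, c4, cr]
  have final1 : ρ * (x ⬝ᵥ x) < x ⬝ᵥ (B *ᵥ x) := by
    have h34 : 0 < x (inl 4) * x (inl 3) := mul_pos (hx (inl 4)) (hx (inl 3))
    linarith [hcompare, hdotA, h34, mul_nonneg (xnn (inl 4)) hx20]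
  have hB := rayleigh_le (gsq (coal TB 3 H w)) x
  rw [← hBdef] at hB
  have final2 : ρ * (x ⬝ᵥ x) < specRad (gsq (coal TB 3 H w)) * (x ⬝ᵥ x) :=
    lt_of_lt_of_le final1 hB
  exact lt_of_mul_lt_mul_right final2 hxx.le
end Main


/-- For `T` the path `v₁v₂v₃v₄` with pendant edge `uv₃` (vertices
`v₁,v₂,v₃,v₄,u = 0,1,2,3,4`), coalescing `v₄` with a vertex `w` of a connected
graph `H`, relocating the pendant edge from `v₃` to `v₁` strictly decreases the
spectral radius of the square. -/
theorem specRad_sq_relocate_pendant_lt {V : Type*} [Fintype V]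
    (H : SimpleGraph V) (hH : H.Connected) (w : V) :
    specRad (gsq (coal (SimpleGraph.fromRel fun a b : Fin 5 =>
        (a, b) ∈ ({(0, 1), (1, 2), (2, 3), (4, 0)} : Set (Fin 5 × Fin 5))) 3 H w)) <
      specRad (gsq (coal (SimpleGraph.fromRel fun a b : Fin 5 =>
        (a, b) ∈ ({(0, 1), (1, 2), (2, 3), (4, 2)} : Set (Fin 5 × Fin 5))) 3 H w)) := by
  exact main_lt H w hH
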